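/- Let D = Diag(λ₁,...,λₙ) be positive definite and X = X* ∈ M_n. Then the SLD Fisher information of the commutator tangent vector satisfies F_min(D; i[D,X]) = Σ_{ij} 2(λᵢ−λⱼ)²/(λᵢ+λⱼ) |X_{ij}|². -/

import Mathlib

open Matrix
open scoped ComplexOrder

/-- for `D = Diag(λ)` positive definite and `X` self-adjoint, the SLD
Fisher information of the tangent vector `B = i[D,X]` is
`F_min(D; i[D,X]) = Σ_{ij} 2 (λᵢ-λⱼ)²/(λᵢ+λⱼ) |X_{ij}|²`, where `F_min(D;B) = Tr B C`
with `C` the solution of `(DC + CD)/2 = B`. -/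
theorem stmt10 {n : ℕ} (lam : Fin n → ℝ) (hlam : ∀ i, 0 < lam i)
    (D : Matrix (Fin n) (Fin n) ℂ) (hD : D = Matrix.diagonal fun i => (lam i : ℂ))
    (X : Matrix (Fin n) (Fin n) ℂ) (hX : X.IsHermitian)
    (B : Matrix (Fin n) (Fin n) ℂ) (hB : B = Complex.I • (D * X - X * D))
    (C : Matrix (Fin n) (Fin n) ℂ) (hC : (1 / 2 : ℂ) • (D * C + C * D) = B) :
    (B * C).trace =
      ((∑ i, ∑ j, 2 * (lam i - lam j) ^ 2 / (lam i + lam j) * ‖X i j‖ ^ 2 : ℝ) : ℂ) := by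
  have hsum : ∀ i j : Fin n, ((lam i : ℂ) + lam j) ≠ 0 := by
    intro i j
    have : (0:ℝ) < lam i + lam j := add_pos (hlam i) (hlam j)
    exact_mod_cast ne_of_gt (by exact_mod_cast this : (0:ℂ) < ((lam i + lam j : ℝ) : ℂ))
  have hBe : ∀ i j, B i j = Complex.I * ((lam i : ℂ) - lam j) * X i j := by
    intro i j
    rw [hB, hD]
    simp [Matrix.sub_apply, Matrix.diagonal_mul, Matrix.mul_diagonal]
    ring
  have hCe : ∀ i j, C i j = 2 * B i j / ((lam i : ℂ) + lam j) := by
    intro i j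
    rw [← Matrix.ext_iff] at hC
    have h := hC i j
    rw [hD] at h
    simp only [Matrix.smul_apply, Matrix.add_apply, Matrix.diagonal_mul,
      Matrix.mul_diagonal, smul_eq_mul] at h
    rw [eq_div_iff (hsum i j), ← h]; ring
  have hXji : ∀ i j, X j i = (starRingEnd ℂ) (X i j) := by
    intro i j
    have := congrFun (congrFun hX.eq j) i
    simpa [Matrix.conjTranspose_apply] using this.symm
  rw [Matrix.trace, ]
  push_cast
  simp only [Matrix.diag_apply, Matrix.mul_apply]
  rw [Finset.sum_comm]
  refine Finset.sum_congr rfl fun i _ => ?_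
  refine Finset.sum_congr rfl fun j _ => ?_
  rw [hCe, hBe, hBe, hXji i j]
  have habs : (starRingEnd ℂ) (X i j) * X i j = ((‖X i j‖ : ℝ) : ℂ) ^ 2 := by
    rw [mul_comm, Complex.mul_conj]
    push_cast [Complex.normSq_eq_norm_sq]
    ring
  linear_combination (2 * ((lam i : ℂ) - lam j) ^ 2 / ((lam i : ℂ) + lam j)) * habs +
    ((-2) * ((lam i : ℂ) - lam j) ^ 2 * (starRingEnd ℂ) (X i j) * X i j /
      ((lam i : ℂ) + lam j)) * Complex.I_sq
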